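/- If q is not a root of unity, then the nonclassical-type representations R^{(ε1,ε2,ε3)}_{jj'} of U'_q(so_4) with j ≥ j' are pairwise nonequivalent: if (j,j',ε1,ε2,ε3) ≠ (s,s',ε1',ε2',ε3') with j ≥ j' and s ≥ s' (both admissible), then R^{(ε1,ε2,ε3)}_{jj'} and R^{(ε1',ε2',ε3')}_{ss'} are not intertwined by any linear isomorphism. -/

import Mathlib

noncomputable section

open Classical

/-- Generators of `U'_q(so_4)`. -/
inductive SO4Gen : Type
  | g21 | g32 | g43

open FreeAlgebra in
/-- Defining relations of `U'_q(so_4)`. -/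
inductive SO4Rel (q : ℂ) : FreeAlgebra ℂ SO4Gen → FreeAlgebra ℂ SO4Gen → Prop
  | r1 : SO4Rel q
      (ι ℂ SO4Gen.g21 * (ι ℂ SO4Gen.g32)^2 - (q + q⁻¹) • (ι ℂ SO4Gen.g32 * ι ℂ SO4Gen.g21 * ι ℂ SO4Gen.g32)
        + (ι ℂ SO4Gen.g32)^2 * ι ℂ SO4Gen.g21) (-(ι ℂ SO4Gen.g21))
  | r2 : SO4Rel q
      (ι ℂ SO4Gen.g32 * (ι ℂ SO4Gen.g21)^2 - (q + q⁻¹) • (ι ℂ SO4Gen.g21 * ι ℂ SO4Gen.g32 * ι ℂ SO4Gen.g21)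
        + (ι ℂ SO4Gen.g21)^2 * ι ℂ SO4Gen.g32) (-(ι ℂ SO4Gen.g32))
  | r3 : SO4Rel q
      (ι ℂ SO4Gen.g32 * (ι ℂ SO4Gen.g43)^2 - (q + q⁻¹) • (ι ℂ SO4Gen.g43 * ι ℂ SO4Gen.g32 * ι ℂ SO4Gen.g43)
        + (ι ℂ SO4Gen.g43)^2 * ι ℂ SO4Gen.g32) (-(ι ℂ SO4Gen.g32))
  | r4 : SO4Rel q
      (ι ℂ SO4Gen.g43 * (ι ℂ SO4Gen.g32)^2 - (q + q⁻¹) • (ι ℂ SO4Gen.g32 * ι ℂ SO4Gen.g43 * ι ℂ SO4Gen.g32)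
        + (ι ℂ SO4Gen.g32)^2 * ι ℂ SO4Gen.g43) (-(ι ℂ SO4Gen.g43))
  | r5 : SO4Rel q (ι ℂ SO4Gen.g21 * ι ℂ SO4Gen.g43) (ι ℂ SO4Gen.g43 * ι ℂ SO4Gen.g21)

/-- The algebra `U'_q(so_4)`. -/
abbrev UqSO4 (q : ℂ) : Type := RingQuot (SO4Rel q)

/-- The generator `I_21` of `U'_q(so_4)`. -/
def J21 (q : ℂ) : UqSO4 q := RingQuot.mkAlgHom ℂ (SO4Rel q) (FreeAlgebra.ι ℂ SO4Gen.g21)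
/-- The generator `I_32` of `U'_q(so_4)`. -/
def J32 (q : ℂ) : UqSO4 q := RingQuot.mkAlgHom ℂ (SO4Rel q) (FreeAlgebra.ι ℂ SO4Gen.g32)
/-- The generator `I_43` of `U'_q(so_4)`. -/
def J43 (q : ℂ) : UqSO4 q := RingQuot.mkAlgHom ℂ (SO4Rel q) (FreeAlgebra.ι ℂ SO4Gen.g43)

/-- q-commutator `[a,b]_q = q^{1/2} a b - q^{-1/2} b a`, where `s = q^{1/2}`. -/
def qbr {A : Type} [Ring A] [Algebra ℂ A] (s : ℂ) (a b : A) : A := s • (a * b) - s⁻¹ • (b * a)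

/-- q-commutator `[a,b]_{q⁻¹} = q^{-1/2} a b - q^{1/2} b a`, where `s = q^{1/2}`. -/
def qbrInv {A : Type} [Ring A] [Algebra ℂ A] (s : ℂ) (a b : A) : A := s⁻¹ • (a * b) - s • (b * a)

def J31 (q s : ℂ) : UqSO4 q := qbr s (J21 q) (J32 q)
def J42 (q s : ℂ) : UqSO4 q := qbr s (J32 q) (J43 q)
def J41 (q s : ℂ) : UqSO4 q := qbr s (J31 q s) (J43 q)
def J31m (q s : ℂ) : UqSO4 q := qbrInv s (J21 q) (J32 q)
def J42m (q s : ℂ) : UqSO4 q := qbrInv s (J32 q) (J43 q)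
def J41m (q s : ℂ) : UqSO4 q := qbrInv s (J31 q s) (J43 q)

/-- The Casimir element `C_4`. -/
def C4 (q s : ℂ) : UqSO4 q :=
  q⁻¹ • (J21 q * J43 q) - J31 q s * J42 q s + q • (J32 q * J41 q s)

/-- The Casimir element `C'_4`. -/
def C4' (q s : ℂ) : UqSO4 q :=
  (q⁻¹)^2 • (J21 q)^2 + (J32 q)^2 + q^2 • (J43 q)^2 + q⁻¹ • (J31 q s * J31m q s)
    + q • (J42 q s * J42m q s) + J41 q s * J41m q s

/-- The q-number `[a]` for the half-integer `a/2` (argument is the doubled half-integer). -/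
def qNum (q s : ℂ) (a : ℤ) : ℂ := (s ^ a - s ^ (-a)) / (q - q⁻¹)

/-- The "plus" q-number `[a]_+` for the half-integer `a/2` (doubled argument). -/
def qNumP (q s : ℂ) (a : ℤ) : ℂ := (s ^ a + s ^ (-a)) / (q - q⁻¹)

/-- Basis "delta" vector of the function space on a finite index set `S ⊆ ℤ × ℤ`;
for `p ∉ S` this is the zero vector (out-of-range basis vectors are `0`). -/
def bvec (S : Finset (ℤ × ℤ)) (p : ℤ × ℤ) : (↥S → ℂ) :=
  fun b => if (b : ℤ × ℤ) = p then 1 else 0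

/-- Index set `{(k,l) : |k| ≤ j, k ≡ j, |l| ≤ j', l ≡ j'}` for the classical-type
representation `R_{jj'}` (all indices are doubled half-integers). -/
def clSupp (j j' : ℤ) : Finset (ℤ × ℤ) :=
  ((Finset.Icc (-j) j) ×ˢ (Finset.Icc (-j') j')).filter
    (fun p => (j - p.1) % 2 = 0 ∧ (j' - p.2) % 2 = 0)

/-- Index set for the nonclassical-type representations (doubled half-integers):
`k ∈ {1/2, …, j}`, `l ∈ {−j', …, j'}` if `j` is half-integral, and
`k ∈ {−j, …, j}`, `l ∈ {1/2, …, j'}` if `j'` is half-integral. -/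
def nclSupp (j j' : ℤ) : Finset (ℤ × ℤ) :=
  if j % 2 = 1 then
    ((Finset.Icc 1 j) ×ˢ (Finset.Icc (-j') j')).filter
      (fun p => p.1 % 2 = 1 ∧ p.2 % 2 = 0)
  else
    ((Finset.Icc (-j) j) ×ˢ (Finset.Icc 1 j')).filter
      (fun p => p.1 % 2 = 0 ∧ p.2 % 2 = 1)

/-- Admissibility of the parameters `(j, j')` for the nonclassical-type representations:
one of them is half-integral and the other is integral (doubled convention: one is odd and
one is even), `j ≥ 0`, `j' ≥ 0`. -/
def Adm (j j' : ℤ) : Prop :=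
  (j % 2 = 1 ∧ j' % 2 = 0 ∧ 1 ≤ j ∧ 0 ≤ j') ∨ (j % 2 = 0 ∧ j' % 2 = 1 ∧ 0 ≤ j ∧ 1 ≤ j')

/-- The formulas (31)–(33) for the classical-type representation `R_{jj'}` of
`U'_q(so_4)` (all indices doubled: `|k,l⟩` is `bvec (clSupp j j') (k, l)`). -/
def IsClRep (q s : ℂ) (j j' : ℤ)
    (R : UqSO4 q →ₐ[ℂ] Module.End ℂ (↥(clSupp j j') → ℂ)) : Prop :=
  ∀ k l : ℤ, (k, l) ∈ clSupp j j' →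
    R (J21 q) (bvec (clSupp j j') (k, l)) =
      (Complex.I * qNum q s (k + l)) • bvec (clSupp j j') (k, l) ∧
    R (J43 q) (bvec (clSupp j j') (k, l)) =
      (Complex.I * qNum q s (k - l)) • bvec (clSupp j j') (k, l) ∧
    R (J32 q) (bvec (clSupp j j') (k, l)) =
      ((s ^ (k + l) + s ^ (-(k + l))) * (s ^ (k - l) + s ^ (-(k - l))))⁻¹ •
        ( (-((s ^ (j - l) + s ^ (-(j - l))) * qNum q s (j' - l))) • bvec (clSupp j j') (k, l + 2)
        + ((s ^ (j + l) + s ^ (-(j + l))) * qNum q s (j' + l)) • bvec (clSupp j j') (k, l - 2)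
        + ((s ^ (j' - k) + s ^ (-(j' - k))) * qNum q s (j - k)) • bvec (clSupp j j') (k + 2, l)
        - ((s ^ (j' + k) + s ^ (-(j' + k))) * qNum q s (j + k)) • bvec (clSupp j j') (k - 2, l))

/-- The formulas (50)–(54) for the nonclassical-type representation
`R^{(ε1,ε2,ε3)}_{jj'}` of `U'_q(so_4)` (all indices doubled: `|k,l⟩` is
`bvec (nclSupp j j') (k, l)`; `(−1)^l` is `(−1)^(l/2)` for the doubled `l`). -/
def IsNclRep (q s ε1 ε2 ε3 : ℂ) (j j' : ℤ)
    (R : UqSO4 q →ₐ[ℂ] Module.End ℂ (↥(nclSupp j j') → ℂ)) : Prop :=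
  (∀ k l : ℤ, (k, l) ∈ nclSupp j j' →
      R (J21 q) (bvec (nclSupp j j') (k, l)) =
        (ε1 * qNumP q s (k + l)) • bvec (nclSupp j j') (k, l) ∧
      R (J43 q) (bvec (nclSupp j j') (k, l)) =
        (ε2 * qNumP q s (k - l)) • bvec (nclSupp j j') (k, l)) ∧
  (∀ k l : ℤ, (k, l) ∈ nclSupp j j' → k ≠ 1 → l ≠ 1 →
      R (J32 q) (bvec (nclSupp j j') (k, l)) =
        (qNum q s (k + l) * qNum q s (k - l) * (q - q⁻¹))⁻¹ •
          ( (-(Complex.I * (qNum q s (j' - l) * qNum q s (j - l)))) • bvec (nclSupp j j') (k, l + 2)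
          + (Complex.I * (qNum q s (j' + l) * qNum q s (j + l))) • bvec (nclSupp j j') (k, l - 2)
          + (-(Complex.I * (qNum q s (j' - k) * qNum q s (j - k)))) • bvec (nclSupp j j') (k + 2, l)
          + (Complex.I * (qNum q s (j' + k) * qNum q s (j + k))) • bvec (nclSupp j j') (k - 2, l))) ∧
  (j % 2 = 1 → ∀ l : ℤ, (1, l) ∈ nclSupp j j' →
      R (J32 q) (bvec (nclSupp j j') (1, l)) =
        (qNum q s (l + 1) * qNum q s (l - 1) * (q - q⁻¹))⁻¹ •
          ( (-(Complex.I * (qNum q s (j - l) * qNum q s (j' - l)))) • bvec (nclSupp j j') (1, l + 2)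
          + (Complex.I * (qNum q s (j + l) * qNum q s (j' + l))) • bvec (nclSupp j j') (1, l - 2)
          + (-(Complex.I * (qNum q s (j' - 1) * qNum q s (j - 1)))) • bvec (nclSupp j j') (3, l)
          + (Complex.I * (qNum q s (j' + 1) * qNum q s (j + 1)) * ε3 * (-1 : ℂ) ^ (l / 2)) •
              bvec (nclSupp j j') (1, -l))) ∧
  (j' % 2 = 1 → ∀ k : ℤ, (k, 1) ∈ nclSupp j j' →
      R (J32 q) (bvec (nclSupp j j') (k, 1)) =
        (qNum q s (k + 1) * qNum q s (k - 1) * (q - q⁻¹))⁻¹ •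
          ( (-(Complex.I * (qNum q s (j - 1) * qNum q s (j' - 1)))) • bvec (nclSupp j j') (k, 3)
          + (Complex.I * (qNum q s (j + 1) * qNum q s (j' + 1)) * ε3 * (-1 : ℂ) ^ (k / 2)) •
              bvec (nclSupp j j') (-k, 1)
          + (-(Complex.I * (qNum q s (j' - k) * qNum q s (j - k)))) • bvec (nclSupp j j') (k + 2, 1)
          + (Complex.I * (qNum q s (j' + k) * qNum q s (j + k))) • bvec (nclSupp j j') (k - 2, 1)))

-- HELPERS START


section zp
variable {q sq : ℂ}

lemma sq_ne_zero (hq0 : q ≠ 0) (hs : sq ^ 2 = q) : sq ≠ 0 := by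
  intro h; apply hq0; rw [← hs, h]; ring

lemma sq_one (hq0 : q ≠ 0) (hroot : ∀ n : ℕ, 1 ≤ n → q ^ n ≠ 1) (hs : sq ^ 2 = q) :
    ∀ m : ℤ, sq ^ m = 1 → m = 0 := by
  intro m hm
  by_contra hm0
  have hsq0 : sq ≠ 0 := sq_ne_zero hq0 hs
  have hq2 : q ^ m = 1 := by
    rw [← hs]
    rw [← zpow_natCast sq 2, ← zpow_mul]
    rw [mul_comm, zpow_mul, hm]
    simp
  have h1 : q ^ (m.natAbs : ℤ) = 1 := by
    rcases Int.natAbs_eq m with h | h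
    · rw [← h]; exact hq2
    · rw [show ((m.natAbs : ℤ)) = -m by omega, zpow_neg, hq2]; simp
  rw [zpow_natCast] at h1
  exact hroot m.natAbs (by omega) h1

lemma sq_neg_one (hq0 : q ≠ 0) (hroot : ∀ n : ℕ, 1 ≤ n → q ^ n ≠ 1) (hs : sq ^ 2 = q) :
    ∀ m : ℤ, sq ^ m ≠ -1 := by
  intro m hm
  have h2 : sq ^ (2 * m) = 1 := by
    rw [mul_comm, zpow_mul]
    rw [hm]; norm_num
  have := sq_one hq0 hroot hs _ h2
  have : m = 0 := by omega
  subst this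
  simp at hm
  norm_num at hm

lemma pm_lemma (hq0 : q ≠ 0) (hroot : ∀ n : ℕ, 1 ≤ n → q ^ n ≠ 1) (hs : sq ^ 2 = q)
    (a b : ℤ) (h : sq ^ a + sq ^ (-a) = sq ^ b + sq ^ (-b)) : a = b ∨ a = -b := by
  have hsq0 : sq ≠ 0 := sq_ne_zero hq0 hs
  have hx : sq ^ a ≠ 0 := zpow_ne_zero _ hsq0
  have hy : sq ^ b ≠ 0 := zpow_ne_zero _ hsq0
  rw [zpow_neg, zpow_neg] at h
  have key : (sq ^ a - sq ^ b) * (sq ^ a * sq ^ b - 1) = 0 := by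
    field_simp at h
    linear_combination h
  rcases mul_eq_zero.mp key with h' | h'
  · left
    have : sq ^ (a - b) = 1 := by
      rw [zpow_sub₀ hsq0, sub_eq_zero.mp h']
      field_simp
    have := sq_one hq0 hroot hs _ this; omega
  · right
    have : sq ^ (a + b) = 1 := by
      rw [zpow_add₀ hsq0]; linear_combination h'
    have := sq_one hq0 hroot hs _ this; omega

lemma anti_lemma (hq0 : q ≠ 0) (hroot : ∀ n : ℕ, 1 ≤ n → q ^ n ≠ 1) (hs : sq ^ 2 = q)
    (a b : ℤ) (h : sq ^ a + sq ^ (-a) = -(sq ^ b + sq ^ (-b))) : False := by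
  have hsq0 : sq ≠ 0 := sq_ne_zero hq0 hs
  have hx : sq ^ a ≠ 0 := zpow_ne_zero _ hsq0
  have hy : sq ^ b ≠ 0 := zpow_ne_zero _ hsq0
  rw [zpow_neg, zpow_neg] at h
  have key : (sq ^ a + sq ^ b) * (sq ^ a * sq ^ b + 1) = 0 := by
    field_simp at h
    linear_combination h
  rcases mul_eq_zero.mp key with h' | h'
  · have : sq ^ (a - b) = -1 := by
      rw [zpow_sub₀ hsq0, div_eq_iff hy]
      linear_combination h'
    exact sq_neg_one hq0 hroot hs _ this
  · have : sq ^ (a + b) = -1 := by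
      rw [zpow_add₀ hsq0]; linear_combination h'
    exact sq_neg_one hq0 hroot hs _ this

end zp


section more
variable {q sq : ℂ}

lemma qden_ne (hq0 : q ≠ 0) (hq1 : q ≠ 1) (hqm1 : q ≠ -1) : q - q⁻¹ ≠ 0 := by
  intro h
  have hqi : q = q⁻¹ := sub_eq_zero.mp h
  have h2 : q ^ 2 = 1 := by rw [sq]; nth_rewrite 2 [hqi]; exact mul_inv_cancel₀ hq0
  have : (q - 1) * (q + 1) = 0 := by linear_combination h2
  rcases mul_eq_zero.mp this with h' | h'
  · exact hq1 (by linear_combination h')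
  · exact hqm1 (by linear_combination h')

lemma qNum_ne_zero (hq0 : q ≠ 0) (hq1 : q ≠ 1) (hqm1 : q ≠ -1)
    (hroot : ∀ n : ℕ, 1 ≤ n → q ^ n ≠ 1) (hs : sq ^ 2 = q) {a : ℤ} (ha : a ≠ 0) :
    qNum q sq a ≠ 0 := by
  have hsq0 : sq ≠ 0 := sq_ne_zero hq0 hs
  unfold qNum
  rw [div_ne_zero_iff]
  refine ⟨?_, qden_ne hq0 hq1 hqm1⟩
  intro h
  have h1 : sq ^ a = sq ^ (-a) := by linear_combination h
  have h2 : sq ^ (2 * a) = 1 := by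
    rw [two_mul, zpow_add₀ hsq0]
    nth_rewrite 1 [h1]
    rw [← zpow_add₀ hsq0]
    simp
  have := sq_one hq0 hroot hs _ h2
  omega

lemma qNumP_sign (hq0 : q ≠ 0) (hq1 : q ≠ 1) (hqm1 : q ≠ -1)
    (hroot : ∀ n : ℕ, 1 ≤ n → q ^ n ≠ 1) (hs : sq ^ 2 = q)
    {ε ε' : ℂ} (hε : ε = 1 ∨ ε = -1) (hε' : ε' = 1 ∨ ε' = -1) (a b : ℤ)
    (h : ε * qNumP q sq a = ε' * qNumP q sq b) : ε = ε' ∧ (a = b ∨ a = -b) := by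
  have hden := qden_ne hq0 hq1 hqm1
  unfold qNumP at h
  rw [← mul_div_assoc, ← mul_div_assoc, div_eq_div_iff hden hden] at h
  have h' : ε * (sq ^ a + sq ^ (-a)) = ε' * (sq ^ b + sq ^ (-b)) := by
    exact mul_right_cancel₀ hden h
  rcases hε with rfl | rfl <;> rcases hε' with rfl | rfl
  · exact ⟨rfl, pm_lemma hq0 hroot hs a b (by linear_combination h')⟩
  · exact absurd (anti_lemma hq0 hroot hs a b (by linear_combination h')) not_false
  · exact absurd (anti_lemma hq0 hroot hs a b (by linear_combination -h')) not_false
  · exact ⟨rfl, pm_lemma hq0 hroot hs a b (by linear_combination -h')⟩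

lemma mem_nclSupp {j j' k l : ℤ} :
    (k, l) ∈ nclSupp j j' ↔
      ((j % 2 = 1 ∧ 1 ≤ k ∧ k ≤ j ∧ -j' ≤ l ∧ l ≤ j' ∧ k % 2 = 1 ∧ l % 2 = 0) ∨
       (j % 2 ≠ 1 ∧ -j ≤ k ∧ k ≤ j ∧ 1 ≤ l ∧ l ≤ j' ∧ k % 2 = 0 ∧ l % 2 = 1)) := by
  unfold nclSupp
  split <;> rename_i hj <;>
    simp only [Finset.mem_filter, Finset.mem_product, Finset.mem_Icc] <;> omega

lemma bvec_single {S : Finset (ℤ × ℤ)} (b : ↥S) : bvec S ↑b = Pi.single b 1 := by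
  funext b'
  simp only [bvec, Pi.single_apply]
  by_cases h : b' = b
  · simp [h]
  · rw [if_neg (fun h' => h (Subtype.ext h')), if_neg h]

lemma pi_sum_repr {S : Finset (ℤ × ℤ)} (v : ↥S → ℂ) :
    v = ∑ c : ↥S, v c • bvec S ↑c := by
  funext b'
  rw [Finset.sum_apply]
  simp only [Pi.smul_apply, bvec_single, Pi.single_apply, smul_eq_mul, mul_ite, mul_one, mul_zero]
  simp

lemma diag_eval {S : Finset (ℤ × ℤ)} (T : Module.End ℂ (↥S → ℂ)) (lam : ℤ × ℤ → ℂ)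
    (h : ∀ p ∈ S, T (bvec S p) = lam p • bvec S p) (v : ↥S → ℂ) (b : ↥S) :
    T v b = lam ↑b * v b := by
  conv_lhs => rw [pi_sum_repr v, map_sum]
  rw [Finset.sum_apply]
  have : ∀ c : ↥S, (T (v c • bvec S ↑c)) b = v c * (lam ↑c * (if b = c then 1 else 0)) := by
    intro c
    rw [map_smul, h ↑c c.2]
    simp only [Pi.smul_apply, bvec_single, Pi.single_apply, smul_eq_mul]
  simp only [this]
  simp [mul_comm]

lemma trace_eq_sum {S : Finset (ℤ × ℤ)} (T : Module.End ℂ (↥S → ℂ)) :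
    LinearMap.trace ℂ _ T = ∑ b : ↥S, T (bvec S ↑b) b := by
  rw [LinearMap.trace_eq_matrix_trace ℂ (Pi.basisFun ℂ ↥S), Matrix.trace]
  apply Finset.sum_congr rfl
  intro b _
  simp [Matrix.diag, LinearMap.toMatrix_apply, Pi.basisFun_apply, Pi.basisFun_repr, bvec_single]

end more


section spectral
variable {q sq : ℂ}

lemma top_mem {j j' : ℤ} (hadm : Adm j j') : (j, j') ∈ nclSupp j j' := by
  rw [mem_nclSupp]; unfold Adm at hadm; omega

lemma spectral_step (hq0 : q ≠ 0) (hq1 : q ≠ 1) (hqm1 : q ≠ -1)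
    (hroot : ∀ n : ℕ, 1 ≤ n → q ^ n ≠ 1) (hs : sq ^ 2 = q)
    (j j' s s' : ℤ) (hadm : Adm j j')
    (ε1 ε2 ε3 ε1' ε2' ε3' : ℂ)
    (hε1 : ε1 = 1 ∨ ε1 = -1) (hε2 : ε2 = 1 ∨ ε2 = -1)
    (hε1' : ε1' = 1 ∨ ε1' = -1) (hε2' : ε2' = 1 ∨ ε2' = -1)
    (R : UqSO4 q →ₐ[ℂ] Module.End ℂ (↥(nclSupp j j') → ℂ))
    (hR : IsNclRep q sq ε1 ε2 ε3 j j' R)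
    (R' : UqSO4 q →ₐ[ℂ] Module.End ℂ (↥(nclSupp s s') → ℂ))
    (hR' : IsNclRep q sq ε1' ε2' ε3' s s' R')
    (L : (↥(nclSupp j j') → ℂ) ≃ₗ[ℂ] (↥(nclSupp s s') → ℂ))
    (hL : ∀ (a : UqSO4 q) (v : ↥(nclSupp j j') → ℂ), L (R a v) = R' a (L v)) :
    ε1 = ε1' ∧ ε2 = ε2' ∧ ∃ k l : ℤ, (k, l) ∈ nclSupp s s' ∧
      (j + j' = k + l ∨ j + j' = -(k + l)) ∧ (j - j' = k - l ∨ j - j' = -(k - l)) := by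
  have hmem : (j, j') ∈ nclSupp j j' := top_mem hadm
  set v := bvec (nclSupp j j') (j, j') with hv
  have hv21 : R (J21 q) v = (ε1 * qNumP q sq (j + j')) • v := (hR.1 j j' hmem).1
  have hv43 : R (J43 q) v = (ε2 * qNumP q sq (j - j')) • v := (hR.1 j j' hmem).2
  have hvne : v ≠ 0 := by
    intro h
    have := congrFun h ⟨(j, j'), hmem⟩
    simp [hv, bvec] at this
  have hwne : L v ≠ 0 := by
    rw [LinearEquiv.map_ne_zero_iff]; exact hvne
  obtain ⟨b, hb⟩ : ∃ b, L v b ≠ 0 := by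
    rw [← Function.ne_iff]; exact hwne
  have hw21 : R' (J21 q) (L v) = (ε1 * qNumP q sq (j + j')) • (L v) := by
    rw [← hL, hv21, map_smul]
  have hw43 : R' (J43 q) (L v) = (ε2 * qNumP q sq (j - j')) • (L v) := by
    rw [← hL, hv43, map_smul]
  have hd21 := diag_eval (R' (J21 q)) (fun p => ε1' * qNumP q sq (p.1 + p.2))
      (fun p hp => by
        have := (hR'.1 p.1 p.2 (by simpa using hp)).1
        simpa using this) (L v) b
  have hd43 := diag_eval (R' (J43 q)) (fun p => ε2' * qNumP q sq (p.1 - p.2))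
      (fun p hp => by
        have := (hR'.1 p.1 p.2 (by simpa using hp)).2
        simpa using this) (L v) b
  rw [hw21] at hd21
  rw [hw43] at hd43
  simp only [Pi.smul_apply, smul_eq_mul] at hd21 hd43
  have e21 : ε1 * qNumP q sq (j + j') = ε1' * qNumP q sq ((b : ℤ × ℤ).1 + (b : ℤ × ℤ).2) :=
    mul_right_cancel₀ hb hd21
  have e43 : ε2 * qNumP q sq (j - j') = ε2' * qNumP q sq ((b : ℤ × ℤ).1 - (b : ℤ × ℤ).2) :=
    mul_right_cancel₀ hb hd43
  obtain ⟨he1, h1⟩ := qNumP_sign hq0 hq1 hqm1 hroot hs hε1 hε1' _ _ e21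
  obtain ⟨he2, h2⟩ := qNumP_sign hq0 hq1 hqm1 hroot hs hε2 hε2' _ _ e43
  refine ⟨he1, he2, (b : ℤ × ℤ).1, (b : ℤ × ℤ).2, by simpa using b.2, ?_, ?_⟩
  · omega
  · omega

end spectral


section trace
variable {q sq : ℂ}

lemma trace_J32 (ε1 ε2 ε3 : ℂ) (j j' : ℤ) (hadm : Adm j j')
    (R : UqSO4 q →ₐ[ℂ] Module.End ℂ (↥(nclSupp j j') → ℂ))
    (hR : IsNclRep q sq ε1 ε2 ε3 j j' R) :
    LinearMap.trace ℂ _ (R (J32 q)) =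
      (qNum q sq 1 * qNum q sq (-1) * (q - q⁻¹))⁻¹ *
        (Complex.I * (qNum q sq (j' + 1) * qNum q sq (j + 1))) * ε3 := by
  rw [trace_eq_sum]
  rcases hadm with ⟨hj, hj', hj1, hj'0⟩ | ⟨hj, hj', hj0, hj'1⟩
  · -- j half-integral (odd doubled)
    have hmem0 : ((1 : ℤ), (0 : ℤ)) ∈ nclSupp j j' := by rw [mem_nclSupp]; omega
    rw [Finset.sum_eq_single_of_mem (⟨(1, 0), hmem0⟩ : ↥(nclSupp j j')) (Finset.mem_univ _)]
    · have hf := hR.2.2.1 hj 0 hmem0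
      show (R (J32 q)) (bvec (nclSupp j j') (1, 0)) ⟨(1, 0), hmem0⟩ = _
      rw [hf]
      simp only [Pi.smul_apply, Pi.add_apply, smul_eq_mul, bvec, Prod.mk.injEq]
      norm_num
      ring
    · intro b _ hb
      obtain ⟨⟨k, l⟩, hmemb⟩ := b
      have hkl : ¬(k = 1 ∧ l = 0) := by
        intro h
        exact hb (by simp [Subtype.ext_iff, h.1, h.2])
      have hl0 : l % 2 = 0 := by rw [mem_nclSupp] at hmemb; omega
      by_cases hk : k = 1
      · subst hk
        have hf := hR.2.2.1 hj l hmemb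
        show (R (J32 q)) (bvec (nclSupp j j') (1, l)) ⟨(1, l), hmemb⟩ = 0
        rw [hf]
        simp only [Pi.smul_apply, Pi.add_apply, smul_eq_mul, bvec, Prod.mk.injEq]
        split_ifs <;> (try omega) <;> ring
      · have hf := hR.2.1 k l hmemb hk (by omega)
        show (R (J32 q)) (bvec (nclSupp j j') (k, l)) ⟨(k, l), hmemb⟩ = 0
        rw [hf]
        simp only [Pi.smul_apply, Pi.add_apply, smul_eq_mul, bvec, Prod.mk.injEq]
        split_ifs <;> (try omega) <;> ring
  · -- j' half-integral (odd doubled)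
    have hmem0 : ((0 : ℤ), (1 : ℤ)) ∈ nclSupp j j' := by rw [mem_nclSupp]; omega
    rw [Finset.sum_eq_single_of_mem (⟨(0, 1), hmem0⟩ : ↥(nclSupp j j')) (Finset.mem_univ _)]
    · have hf := hR.2.2.2 hj' 0 hmem0
      show (R (J32 q)) (bvec (nclSupp j j') (0, 1)) ⟨(0, 1), hmem0⟩ = _
      rw [hf]
      simp only [Pi.smul_apply, Pi.add_apply, smul_eq_mul, bvec, Prod.mk.injEq]
      norm_num
      ring
    · intro b _ hb
      obtain ⟨⟨k, l⟩, hmemb⟩ := b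
      have hkl : ¬(k = 0 ∧ l = 1) := by
        intro h
        exact hb (by simp [Subtype.ext_iff, h.1, h.2])
      have hk0 : k % 2 = 0 := by rw [mem_nclSupp] at hmemb; omega
      by_cases hl : l = 1
      · subst hl
        have hf := hR.2.2.2 hj' k hmemb
        show (R (J32 q)) (bvec (nclSupp j j') (k, 1)) ⟨(k, 1), hmemb⟩ = 0
        rw [hf]
        simp only [Pi.smul_apply, Pi.add_apply, smul_eq_mul, bvec, Prod.mk.injEq]
        split_ifs <;> (try omega) <;> ring
      · have hf := hR.2.1 k l hmemb (by omega) hl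
        show (R (J32 q)) (bvec (nclSupp j j') (k, l)) ⟨(k, l), hmemb⟩ = 0
        rw [hf]
        simp only [Pi.smul_apply, Pi.add_apply, smul_eq_mul, bvec, Prod.mk.injEq]
        split_ifs <;> (try omega) <;> ring

end trace

-- HELPERS END

/-- second part of Theorem 3: if `q` is not a root of unity, the
nonclassical-type representations `R^{(ε1,ε2,ε3)}_{jj'}` with `j ≥ j'` are pairwise
nonequivalent: no linear isomorphism intertwines two of them with distinct parameter
tuples. -/
theorem stmt_9 (q sq : ℂ) (hq0 : q ≠ 0) (hq1 : q ≠ 1) (hqm1 : q ≠ -1)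
    (hroot : ∀ n : ℕ, 1 ≤ n → q ^ n ≠ 1) (hs : sq ^ 2 = q)
    (j j' s s' : ℤ) (hadm : Adm j j') (hadm' : Adm s s') (hjj' : j' ≤ j) (hss' : s' ≤ s)
    (ε1 ε2 ε3 ε1' ε2' ε3' : ℂ)
    (hε1 : ε1 = 1 ∨ ε1 = -1) (hε2 : ε2 = 1 ∨ ε2 = -1) (hε3 : ε3 = 1 ∨ ε3 = -1)
    (hε1' : ε1' = 1 ∨ ε1' = -1) (hε2' : ε2' = 1 ∨ ε2' = -1) (hε3' : ε3' = 1 ∨ ε3' = -1)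
    (hne : (j, j', ε1, ε2, ε3) ≠ (s, s', ε1', ε2', ε3'))
    (R : UqSO4 q →ₐ[ℂ] Module.End ℂ (↥(nclSupp j j') → ℂ))
    (hR : IsNclRep q sq ε1 ε2 ε3 j j' R)
    (R' : UqSO4 q →ₐ[ℂ] Module.End ℂ (↥(nclSupp s s') → ℂ))
    (hR' : IsNclRep q sq ε1' ε2' ε3' s s' R') :
    ¬ ∃ L : (↥(nclSupp j j') → ℂ) ≃ₗ[ℂ] (↥(nclSupp s s') → ℂ),
        ∀ (a : UqSO4 q) (v : ↥(nclSupp j j') → ℂ), L (R a v) = R' a (L v) := by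
  rintro ⟨L, hL⟩
  have hLsymm : ∀ (a : UqSO4 q) (w : ↥(nclSupp s s') → ℂ), L.symm (R' a w) = R a (L.symm w) := by
    intro a w
    apply L.injective
    rw [hL, L.apply_symm_apply, L.apply_symm_apply]
  obtain ⟨he1, he2, k, l, hm, h1, h2⟩ :=
    spectral_step hq0 hq1 hqm1 hroot hs j j' s s' hadm ε1 ε2 ε3 ε1' ε2' ε3'
      hε1 hε2 hε1' hε2' R hR R' hR' L hL
  obtain ⟨_, _, k2, l2, hm2, h12, h22⟩ :=
    spectral_step hq0 hq1 hqm1 hroot hs s s' j j' hadm' ε1' ε2' ε3' ε1 ε2 ε3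
      hε1' hε2' hε1 hε2 R' hR' R hR L.symm hLsymm
  rw [mem_nclSupp] at hm hm2
  have hjs : j = s ∧ j' = s' := by
    unfold Adm at hadm hadm'; omega
  obtain ⟨hj1, hj2⟩ := hjs
  subst hj1; subst hj2; subst he1; subst he2
  have hε3ne : ε3 ≠ ε3' := fun h => hne (by rw [h])
  have hconj : R' (J32 q) = L.conj (R (J32 q)) := by
    apply LinearMap.ext
    intro w
    rw [LinearEquiv.conj_apply_apply, hL, L.apply_symm_apply]
  have htr : LinearMap.trace ℂ _ (R' (J32 q)) = LinearMap.trace ℂ _ (R (J32 q)) := by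
    rw [hconj, LinearMap.trace_conj']
  rw [trace_J32 ε1 ε2 ε3' j j' hadm R' hR', trace_J32 ε1 ε2 ε3 j j' hadm R hR] at htr
  have hj0 : (0:ℤ) ≤ j ∧ (0:ℤ) ≤ j' := by unfold Adm at hadm; omega
  have hcst : (qNum q sq 1 * qNum q sq (-1) * (q - q⁻¹))⁻¹ *
      (Complex.I * (qNum q sq (j' + 1) * qNum q sq (j + 1))) ≠ 0 := by
    apply mul_ne_zero
    · apply inv_ne_zero
      apply mul_ne_zero
      apply mul_ne_zero
      · exact qNum_ne_zero hq0 hq1 hqm1 hroot hs (by norm_num)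
      · exact qNum_ne_zero hq0 hq1 hqm1 hroot hs (by norm_num)
      · exact qden_ne hq0 hq1 hqm1
    · apply mul_ne_zero Complex.I_ne_zero
      apply mul_ne_zero
      · exact qNum_ne_zero hq0 hq1 hqm1 hroot hs (by omega)
      · exact qNum_ne_zero hq0 hq1 hqm1 hroot hs (by omega)
  exact hε3ne (mul_left_cancel₀ hcst (by linear_combination htr)).symm
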